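/- Let n ≥ 6 with n ≡ 0 (mod 3). The graph C(n) = K₃ * ((n−3)/3)K₃, obtained by choosing a vertex v₀ of a triangle and joining v₀ to exactly one vertex of each of (n−3)/3 disjoint triangles, has exactly 2·3^{(n−3)/3} + 2^{(n−3)/3} maximal independent sets. -/

import Mathlib

attribute [local instance] Classical.propDecidable

/-- `s` is an independent set of vertices of `G`. -/
def IsIndep {V : Type*} (G : SimpleGraph V) (s : Finset V) : Prop :=
  ∀ u ∈ s, ∀ v ∈ s, ¬ G.Adj u v

/-- `s` is a maximal independent set of vertices of `G`. -/
def IsMaxlIndep {V : Type*} (G : SimpleGraph V) (s : Finset V) : Prop :=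
  IsIndep G s ∧ ∀ t : Finset V, IsIndep G t → s ⊆ t → s = t

/-- `m(G)`: the number of maximal independent sets of `G`. -/
noncomputable def numMaxlIndep {V : Type*} [Fintype V] (G : SimpleGraph V) : ℕ :=
  Set.ncard {s : Finset V | IsMaxlIndep G s}

/-- The graph `C(n) = K₃ * ((n-3)/3)K₃` for `n ≡ 0 (mod 3)`, realized on
`Fin n`: vertices `0,1,2` form the central triangle with distinguished vertex
`v₀ = 0`; the remaining vertices form `(n-3)/3` triangles
`{3j, 3j+1, 3j+2}` (`j ≥ 1`), and `v₀` is joined to the first vertex `3j`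
of each of these triangles. -/
def Cn (n : ℕ) : SimpleGraph (Fin n) where
  Adj a b := a ≠ b ∧
    ((if (a : ℕ) < 3 then 0 else 1 + ((a : ℕ) - 3) / 3) =
        (if (b : ℕ) < 3 then 0 else 1 + ((b : ℕ) - 3) / 3) ∨
      ((a : ℕ) = 0 ∧ 3 ≤ (b : ℕ) ∧ (b : ℕ) % 3 = 0) ∨
      ((b : ℕ) = 0 ∧ 3 ≤ (a : ℕ) ∧ (a : ℕ) % 3 = 0))
  symm := by
    constructor
    rintro a b ⟨h1, h2 | h2 | h2⟩
    · exact ⟨h1.symm, Or.inl h2.symm⟩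
    · exact ⟨h1.symm, Or.inr (Or.inr h2)⟩
    · exact ⟨h1.symm, Or.inr (Or.inl h2)⟩
  loopless := by constructor; rintro a ⟨h1, _⟩; exact h1 rfl


namespace Stmt13Aux

lemma Cn_adj {n : ℕ} {a b : Fin n} : (Cn n).Adj a b ↔ a ≠ b ∧
    ((if (a : ℕ) < 3 then 0 else 1 + ((a : ℕ) - 3) / 3) =
        (if (b : ℕ) < 3 then 0 else 1 + ((b : ℕ) - 3) / 3) ∨
      ((a : ℕ) = 0 ∧ 3 ≤ (b : ℕ) ∧ (b : ℕ) % 3 = 0) ∨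
      ((b : ℕ) = 0 ∧ 3 ≤ (a : ℕ) ∧ (a : ℕ) % 3 = 0)) := Iff.rfl

def vtx {n k : ℕ} (hnk : n = 3*k+3) (j : Fin (k+1)) (r : Fin 3) : Fin n :=
  ⟨3*j.val+r.val, by have h1 := j.isLt; have h2 := r.isLt; omega⟩

lemma vtx_inj {n k : ℕ} (hnk : n = 3*k+3) {j j' : Fin (k+1)} {r r' : Fin 3} :
    vtx hnk j r = vtx hnk j' r' ↔ j = j' ∧ r = r' := by
  simp only [vtx, Fin.mk.injEq, Fin.ext_iff]
  omega

lemma vtx_surj {n k : ℕ} (hnk : n = 3*k+3) (a : Fin n) :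
    ∃ j r, vtx hnk j r = a := by
  have ha := a.isLt
  refine ⟨⟨a.val / 3, by omega⟩, ⟨a.val % 3, by omega⟩, ?_⟩
  simp only [vtx, Fin.ext_iff]
  omega

lemma adj_vtx {n k : ℕ} (hnk : n = 3*k+3) {j j' : Fin (k+1)} {r r' : Fin 3} :
    (Cn n).Adj (vtx hnk j r) (vtx hnk j' r') ↔
      ¬(j = j' ∧ r = r') ∧ (j = j' ∨ (r = 0 ∧ r' = 0 ∧ (j = 0 ∨ j' = 0))) := by
  have h1 := j.isLt; have h2 := r.isLt; have h3 := j'.isLt; have h4 := r'.isLt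
  rw [Cn_adj, Ne, vtx_inj hnk]
  simp only [vtx, Fin.ext_iff, Fin.val_zero]
  by_cases hA : 3 * (j : ℕ) + r < 3 <;> by_cases hB : 3 * (j' : ℕ) + r' < 3 <;>
    simp only [hA, hB, if_pos, if_neg, not_false_eq_true, true_or, and_true] <;> omega

def mis {n k : ℕ} (hnk : n = 3*k+3) (g : Fin (k+1) → Fin 3) : Finset (Fin n) :=
  Finset.image (fun j => vtx hnk j (g j)) Finset.univ

lemma mem_mis {n k : ℕ} (hnk : n = 3*k+3) {g : Fin (k+1) → Fin 3}
    {j : Fin (k+1)} {r : Fin 3} : vtx hnk j r ∈ mis hnk g ↔ g j = r := by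
  simp only [mis, Finset.mem_image, Finset.mem_univ, true_and]
  constructor
  · rintro ⟨j', h⟩
    obtain ⟨rfl, rfl⟩ := (vtx_inj hnk).1 h
    rfl
  · rintro rfl; exact ⟨j, rfl⟩

def P {k : ℕ} (g : Fin (k+1) → Fin 3) : Prop := g 0 = 0 → ∀ j, j ≠ 0 → g j ≠ 0

lemma mis_indep {n k : ℕ} (hnk : n = 3*k+3) {g : Fin (k+1) → Fin 3} (hg : P g) :
    IsIndep (Cn n) (mis hnk g) := by
  intro u hu v hv hadj
  simp only [mis, Finset.mem_image, Finset.mem_univ, true_and] at hu hv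
  obtain ⟨j, rfl⟩ := hu; obtain ⟨j', rfl⟩ := hv
  rw [adj_vtx hnk] at hadj
  obtain ⟨hne, hj | ⟨h0, h0', hj0 | hj0⟩⟩ := hadj
  · exact hne ⟨hj, by rw [hj]⟩
  · subst hj0
    have hj' : j' ≠ 0 := by rintro rfl; exact hne ⟨rfl, rfl⟩
    exact hg h0 j' hj' h0'
  · subst hj0
    have hj : j ≠ 0 := by rintro rfl; exact hne ⟨rfl, rfl⟩
    exact hg h0' j hj h0

lemma mis_maximal {n k : ℕ} (hnk : n = 3*k+3) {g : Fin (k+1) → Fin 3} (hg : P g) :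
    IsMaxlIndep (Cn n) (mis hnk g) := by
  refine ⟨mis_indep hnk hg, fun t ht hsub => ?_⟩
  refine Finset.Subset.antisymm hsub fun a ha => ?_
  obtain ⟨j, r, rfl⟩ := vtx_surj hnk a
  have h1 : vtx hnk j (g j) ∈ t := hsub ((mem_mis hnk).2 rfl)
  by_cases hr : g j = r
  · exact (mem_mis hnk).2 hr
  · exact absurd ((adj_vtx hnk).2 ⟨fun h => hr h.2.symm, Or.inl rfl⟩) (ht _ ha _ h1)

lemma exists_g {n k : ℕ} (hnk : n = 3*k+3) {s : Finset (Fin n)}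
    (hs : IsMaxlIndep (Cn n) s) : ∃ g, P g ∧ s = mis hnk g := by
  obtain ⟨hind, hmax⟩ := hs
  have hex : ∀ j : Fin (k+1), ∃ r, vtx hnk j r ∈ s := by
    intro j
    by_contra hcon
    push_neg at hcon
    have ht : IsIndep (Cn n) (insert (vtx hnk j 1) s) := by
      intro u hu v hv hadj
      rw [Finset.mem_insert] at hu hv
      rcases hu with rfl | hu <;> rcases hv with rfl | hv
      · exact (Cn _).loopless.irrefl _ hadj
      · obtain ⟨j', r', rfl⟩ := vtx_surj hnk v
        rw [adj_vtx hnk] at hadj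
        obtain ⟨hne, hj | ⟨h0, _, _⟩⟩ := hadj
        · exact hcon r' (hj ▸ hv)
        · exact absurd h0 (by decide)
      · obtain ⟨j', r', rfl⟩ := vtx_surj hnk u
        rw [adj_vtx hnk] at hadj
        obtain ⟨hne, hj | ⟨_, h0, _⟩⟩ := hadj
        · exact hcon r' (hj ▸ hu)
        · exact absurd h0 (by decide)
      · exact hind u hu v hv hadj
    have heq := hmax _ ht (Finset.subset_insert _ _)
    exact hcon 1 (heq ▸ Finset.mem_insert_self _ _)
  choose g hgmem using hex
  have huniq : ∀ j r, vtx hnk j r ∈ s → r = g j := by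
    intro j r hr
    by_contra hne
    exact hind _ hr _ (hgmem j) ((adj_vtx hnk).2 ⟨fun h => hne h.2, Or.inl rfl⟩)
  have hseq : s = mis hnk g := by
    apply Finset.Subset.antisymm
    · intro a ha
      obtain ⟨j, r, rfl⟩ := vtx_surj hnk a
      exact (mem_mis hnk).2 (huniq j r ha).symm
    · intro a ha
      simp only [mis, Finset.mem_image, Finset.mem_univ, true_and] at ha
      obtain ⟨j, rfl⟩ := ha
      exact hgmem j
  refine ⟨g, ?_, hseq⟩
  intro h0 j hj hj0
  have h1 : vtx hnk 0 (g 0) ∈ s := hgmem 0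
  have h2 : vtx hnk j (g j) ∈ s := hgmem j
  rw [h0] at h1; rw [hj0] at h2
  exact hind _ h1 _ h2 ((adj_vtx hnk).2
    ⟨fun h => hj h.1.symm, Or.inr ⟨rfl, rfl, Or.inl rfl⟩⟩)

lemma mis_injective {n k : ℕ} (hnk : n = 3*k+3) : Function.Injective (mis hnk) := by
  intro g g' h
  funext j
  have : vtx hnk j (g j) ∈ mis hnk g' := h ▸ (mem_mis hnk).2 rfl
  exact ((mem_mis hnk).1 this).symm


def toFunP (k : ℕ) : ((Fin 2 × (Fin k → Fin 3)) ⊕ (Fin k → Fin 2)) →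
    {g : Fin (k+1) → Fin 3 // P g}
  | Sum.inl (i, f) => ⟨Fin.cons i.succ f, fun h0 => absurd h0 (by
      simp only [Fin.cons_zero]; exact Fin.succ_ne_zero i)⟩
  | Sum.inr f => ⟨Fin.cons 0 (fun j => (f j).succ), fun _ j hj => by
      rcases Fin.eq_zero_or_eq_succ j with rfl | ⟨i, rfl⟩
      · exact absurd rfl hj
      · simp only [Fin.cons_succ]; exact Fin.succ_ne_zero _⟩

lemma toFunP_bij (k : ℕ) : Function.Bijective (toFunP k) := by
  constructor
  · rintro (⟨i, f⟩ | f) (⟨i', f'⟩ | f') h <;>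
      (have h' := congrArg Subtype.val h; simp only [toFunP] at h')
    · have h0 := congrFun h' 0
      simp only [Fin.cons_zero, Fin.succ_inj] at h0
      have hf : f = f' := by
        funext j
        have := congrFun h' j.succ
        simpa using this
      rw [h0, hf]
    · have h0 := congrFun h' 0
      simp only [Fin.cons_zero] at h0
      exact absurd h0 (Fin.succ_ne_zero i)
    · have h0 := congrFun h' 0
      simp only [Fin.cons_zero] at h0
      exact absurd h0.symm (Fin.succ_ne_zero i')
    · have hf : f = f' := by
        funext j
        have := congrFun h' j.succ
        simp only [Fin.cons_succ] at this
        exact Fin.succ_injective _ this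
      rw [hf]
  · rintro ⟨g, hg⟩
    by_cases h0 : g 0 = 0
    · refine ⟨Sum.inr (fun j => (g j.succ).pred (hg h0 j.succ (Fin.succ_ne_zero j))), ?_⟩
      apply Subtype.ext
      funext j
      rcases Fin.eq_zero_or_eq_succ j with rfl | ⟨i, rfl⟩
      · simp [toFunP, h0]
      · simp [toFunP, Fin.succ_pred]
    · refine ⟨Sum.inl ((g 0).pred h0, fun j => g j.succ), ?_⟩
      apply Subtype.ext
      funext j
      rcases Fin.eq_zero_or_eq_succ j with rfl | ⟨i, rfl⟩
      · simp [toFunP, Fin.succ_pred]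
      · simp [toFunP]

lemma card_P (k : ℕ) : Nat.card {g : Fin (k+1) → Fin 3 // P g} = 2 * 3^k + 2^k := by
  rw [← Nat.card_congr (Equiv.ofBijective _ (toFunP_bij k))]
  simp [Nat.card_eq_fintype_card, Fintype.card_fun]


end Stmt13Aux

/-- `C(n)` has exactly `2·3^{(n-3)/3} + 2^{(n-3)/3}` maximal independent
sets. -/
theorem stmt13 (n : ℕ) (hn : 6 ≤ n) (h3 : n % 3 = 0) :
    numMaxlIndep (Cn n) = 2 * 3 ^ ((n - 3) / 3) + 2 ^ ((n - 3) / 3) := by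
  obtain ⟨k, rfl⟩ : ∃ k, n = 3*k+3 := ⟨n/3 - 1, by omega⟩
  have hnk : 3*k+3 = 3*k+3 := rfl
  have hset : {s : Finset (Fin (3*k+3)) | IsMaxlIndep (Cn (3*k+3)) s} =
      Stmt13Aux.mis hnk '' {g | Stmt13Aux.P g} := by
    ext s
    simp only [Set.mem_setOf_eq, Set.mem_image]
    constructor
    · intro hs
      obtain ⟨g, hg, rfl⟩ := Stmt13Aux.exists_g hnk hs
      exact ⟨g, hg, rfl⟩
    · rintro ⟨g, hg, rfl⟩
      exact Stmt13Aux.mis_maximal hnk hg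
  rw [show (3*k+3-3)/3 = k by omega]
  rw [numMaxlIndep, hset,
    Set.ncard_image_of_injective _ (Stmt13Aux.mis_injective hnk),
    ← Nat.card_coe_set_eq]
  exact Stmt13Aux.card_P k
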